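/- Let V = { a = (a₁, a₂, …) : a_i ∈ ℂ, ∑_{i=1}^∞ |a_i|² < ∞ } be the complex vector space of square-summable sequences, with the quadratic form f(a) = ∑_{i=1}^∞ a_i² (the series converges absolutely for a ∈ V), and let Cl(V,f) be its Clifford algebra with canonical map ι. Let n be an odd positive integer and let v₁, …, v_n ∈ V be the standard unit vectors (v_i has 1 in the i-th coordinate and 0 elsewhere). Let U = v₁^⊥ ∩ … ∩ v_n^⊥ = { u ∈ V : u₁ = … = u_n = 0 } and let E = Cl(U,f)_0̄ be the ℂ-linear span of 1 together with all products of evenly many elements of ι(U). Then C(ι(v₁)) ∩ C(ι(v₂)) ∩ … ∩ C(ι(v_n)) = E + ι(v₁)ι(v₂)⋯ι(v_n)·E, where C(x) denotes the centralizer of x in Cl(V,f). -/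

import Mathlib

set_option linter.unusedSectionVars false

/-- The even part `Cl(U,f)ō` of the Clifford subalgebra generated by a subset `U ⊆ V`:
the `ℂ`-linear span of `1` together with all products of evenly many elements `ι(u)`,
`u ∈ U`. -/
def evenCliffordPart {V : Type*} [AddCommGroup V] [Module ℂ V] (f : QuadraticForm ℂ V)
    (U : Set V) : Submodule ℂ (CliffordAlgebra f) :=
  Submodule.span ℂ {x | ∃ (k : ℕ) (u : Fin (2 * k) → V), (∀ j, u j ∈ U) ∧
    x = ((List.finRange (2 * k)).map fun j => CliffordAlgebra.ι f (u j)).prod}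

noncomputable section Aux

namespace Stmt16Aux

open CliffordAlgebra

/-! ### Generic sign lemmas -/

variable {A : Type*} [Ring A]

lemma anticomm_prod (x : A) : ∀ (l : List A), (∀ a ∈ l, x * a = -(a * x)) →
    x * l.prod = (-1:A)^l.length * (l.prod * x) := by
  intro l
  induction l with
  | nil => simp
  | cons b t ih =>
    intro h
    have hb := h b (by simp)
    have ht := ih (fun a ha => h a (by simp [ha]))
    simp only [List.prod_cons, List.length_cons]
    rw [← mul_assoc, hb, neg_mul, mul_assoc, ht, ← mul_assoc,
      ((Commute.neg_one_right b).pow_right t.length).eq, pow_succ']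
    simp [mul_assoc]

lemma anticomm_prod' (x : A) (l : List A) (h : ∀ a ∈ l, x * a = -(a * x)) :
    l.prod * x = (-1:A)^l.length * (x * l.prod) := by
  rw [anticomm_prod x l h, ← mul_assoc, ← pow_add, Even.neg_one_pow ⟨l.length, rfl⟩, one_mul]

lemma sign_pm (k : ℕ) : ((-1:A)^k = 1 ∨ (-1:A)^k = -1) := by
  rcases Nat.even_or_odd k with h | h
  · exact Or.inl h.neg_one_pow
  · exact Or.inr h.neg_one_pow

lemma sign_mul_pm {s t : A} (hs : s = 1 ∨ s = -1) (ht : t = 1 ∨ t = -1) :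
    s * t = 1 ∨ s * t = -1 := by
  rcases hs with rfl | rfl <;> rcases ht with rfl | rfl <;> simp

lemma neg_one_pow_congr {A : Type*} [Monoid A] [HasDistribNeg A] {p q : ℕ}
    (h : p % 2 = q % 2) : (-1:A)^p = (-1)^q := by
  rcases Nat.even_or_odd p with hp | hp
  · have hq : Even q := by rw [Nat.even_iff] at *; omega
    rw [hp.neg_one_pow, hq.neg_one_pow]
  · have hq : Odd q := by rw [Nat.odd_iff] at *; omega
    rw [hp.neg_one_pow, hq.neg_one_pow]

/-! ### The ℓ² quadratic form -/

abbrev Vs := lp (fun _ : ℕ => ℂ) 2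

lemma sq_summable (a : Vs) : Summable (fun k => (a k)^2) := by
  apply Summable.of_norm
  have h := (lp.memℓp a).summable (p := 2) (by norm_num)
  simp only [ENNReal.toReal_ofNat] at h
  convert h using 2 with k
  rw [norm_pow, ← Real.rpow_natCast]
  norm_num

lemma Q_single_add (Q : QuadraticForm ℂ Vs)
    (hQ : ∀ a : Vs, Q a = ∑' i, (a i) ^ 2) (i : ℕ) (a : Vs) :
    Q ((lp.single 2 i 1 : Vs) + a) = Q a + (2 * a i + 1) := by
  rw [hQ, hQ]
  have hg : ∀ k, (((lp.single 2 i (1:ℂ) : Vs) + a) k)^2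
      = (a k)^2 + (if k = i then 2 * a i + 1 else 0) := by
    intro k
    rw [lp.coeFn_add, Pi.add_apply]
    by_cases h : k = i
    · subst h
      rw [lp.single_apply_self, if_pos rfl]; ring
    · rw [lp.single_apply_ne _ _ _ h, if_neg h]; ring
  rw [tsum_congr hg, Summable.tsum_add (sq_summable a) (summable_of_ne_finset_zero (s := {i})
    (by intro k hk; simp at hk; simp [hk]))]
  congr 1
  rw [tsum_eq_single i (by intro k hk; simp [hk])]
  simp

section Main

variable (Q : QuadraticForm ℂ Vs) {n : ℕ} (v : Fin n → Vs) (U : Set Vs)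

/-- ordered product of generators indexed by a finset -/
def eT (T : Finset (Fin n)) : CliffordAlgebra Q :=
  ((T.sort (· ≤ ·)).map fun i => ι Q (v i)).prod

/-- product of `ι`'s of a list of vectors -/
def uP (l : List Vs) : CliffordAlgebra Q := (l.map (ι Q)).prod

variable {Q v U}

section Relations

variable (hsq : ∀ i, ι Q (v i) * ι Q (v i) = 1)
  (hanti : ∀ i j : Fin n, i ≠ j → ι Q (v i) * ι Q (v j) = -(ι Q (v j) * ι Q (v i)))
  (hantiU : ∀ (i : Fin n), ∀ u ∈ U, ι Q (v i) * ι Q u = -(ι Q u * ι Q (v i)))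

include hantiU in
lemma e_mul_uP (i : Fin n) (l : List Vs) (hl : ∀ u ∈ l, u ∈ U) :
    ι Q (v i) * uP Q l = (-1:CliffordAlgebra Q)^l.length * (uP Q l * ι Q (v i)) := by
  have := anticomm_prod (ι Q (v i)) (l.map (ι Q)) ?_
  · simpa [uP, List.length_map] using this
  · rintro a ha
    obtain ⟨u, hu, rfl⟩ := List.mem_map.1 ha
    exact hantiU i u (hl u hu)

include hantiU in
lemma uP_mul_e (i : Fin n) (l : List Vs) (hl : ∀ u ∈ l, u ∈ U) :
    uP Q l * ι Q (v i) = (-1:CliffordAlgebra Q)^l.length * (ι Q (v i) * uP Q l) := by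
  have := anticomm_prod' (ι Q (v i)) (l.map (ι Q)) ?_
  · simpa [uP, List.length_map] using this
  · rintro a ha
    obtain ⟨u, hu, rfl⟩ := List.mem_map.1 ha
    exact hantiU i u (hl u hu)

include hanti in
lemma e_mul_eprod (i : Fin n) (l : List (Fin n)) (hl : i ∉ l) :
    ι Q (v i) * (l.map fun j => ι Q (v j)).prod
      = (-1:CliffordAlgebra Q)^l.length * ((l.map fun j => ι Q (v j)).prod * ι Q (v i)) := by
  have := anticomm_prod (ι Q (v i)) (l.map fun j => ι Q (v j)) ?_
  · simpa [List.length_map] using this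
  · rintro a ha
    obtain ⟨j, hj, rfl⟩ := List.mem_map.1 ha
    exact hanti i j (fun h => hl (h ▸ hj))

include hanti in
lemma eprod_mul_e (i : Fin n) (l : List (Fin n)) (hl : i ∉ l) :
    (l.map fun j => ι Q (v j)).prod * ι Q (v i)
      = (-1:CliffordAlgebra Q)^l.length * (ι Q (v i) * (l.map fun j => ι Q (v j)).prod) := by
  have := anticomm_prod' (ι Q (v i)) (l.map fun j => ι Q (v j)) ?_
  · simpa [List.length_map] using this
  · rintro a ha
    obtain ⟨j, hj, rfl⟩ := List.mem_map.1 ha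
    exact hanti i j (fun h => hl (h ▸ hj))

end Relations

/-! ### sorted list surgery -/

lemma sort_split {T : Finset (Fin n)} {i : Fin n} (h : i ∈ T) :
    ∃ l₁ l₂ : List (Fin n), i ∉ l₁ ∧ i ∉ l₂ ∧ T.sort (· ≤ ·) = l₁ ++ i :: l₂ := by
  obtain ⟨l₁, l₂, hL⟩ := List.append_of_mem ((Finset.mem_sort (· ≤ ·)).2 h)
  have hnd := Finset.sort_nodup T (· ≤ ·)
  rw [hL] at hnd
  rw [List.nodup_append] at hnd
  obtain ⟨h₁, h₂, h₃⟩ := hnd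
  refine ⟨l₁, l₂, fun hi => h₃ i hi i (by simp) rfl, (List.nodup_cons.1 h₂).1, hL⟩

lemma sort_insert_split {T : Finset (Fin n)} {i : Fin n} (h : i ∉ T) :
    ∃ l₁ l₂ : List (Fin n), i ∉ l₁ ∧ i ∉ l₂ ∧
      Finset.sort (insert i T) (· ≤ ·) = l₁ ++ i :: l₂ ∧ T.sort (· ≤ ·) = l₁ ++ l₂ := by
  obtain ⟨l₁, l₂, h1, h2, hL⟩ := sort_split (T := insert i T) (i := i) (Finset.mem_insert_self i T)
  refine ⟨l₁, l₂, h1, h2, hL, ?_⟩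
  have hperm : List.Perm (Finset.sort (insert i T) (· ≤ ·)) (i :: T.sort (· ≤ ·)) :=
    ((Finset.sort_perm_toList _ _).trans (Finset.toList_insert h)).trans
      (List.Perm.cons i (Finset.sort_perm_toList _ _).symm)
  have hperm2 : List.Perm (l₁ ++ l₂) (T.sort (· ≤ ·)) := by
    have := hperm.erase i
    rw [hL] at this
    rwa [List.erase_append_right _ h1, List.erase_cons_head, List.erase_cons_head] at this
  have hsorted : (l₁ ++ l₂).Pairwise (· ≤ ·) := by
    have hs := Finset.pairwise_sort (insert i T) (· ≤ ·)
    rw [hL] at hs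
    exact hs.sublist ((List.sublist_cons_self i l₂).append_left l₁)
  exact (List.Perm.eq_of_pairwise' hsorted (Finset.pairwise_sort _ _) hperm2).symm

section Core

variable (hsq : ∀ i, ι Q (v i) * ι Q (v i) = 1)
  (hanti : ∀ i j : Fin n, i ≠ j → ι Q (v i) * ι Q (v j) = -(ι Q (v j) * ι Q (v i)))

lemma sign_comm {A : Type*} [Ring A] (k : ℕ) (x y : A) :
    x * ((-1:A)^k * y) = (-1:A)^k * (x * y) := by
  rw [← mul_assoc, ((Commute.neg_one_right x).pow_right k).eq, mul_assoc]

include hsq in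
lemma flip_e (i : Fin n) {x y s : CliffordAlgebra Q} (hs : s = 1 ∨ s = -1)
    (h : ι Q (v i) * x = s * y) : ι Q (v i) * y = s * x := by
  rcases hs with rfl | rfl
  · rw [one_mul] at h ⊢
    rw [← h, ← mul_assoc, hsq, one_mul]
  · rw [neg_one_mul] at h ⊢
    rw [← neg_eq_iff_eq_neg.2 h, mul_neg, ← mul_assoc, hsq, one_mul]

include hsq in
lemma e_e_cancel (i : Fin n) (x : CliffordAlgebra Q) :
    ι Q (v i) * (ι Q (v i) * x) = x := by
  rw [← mul_assoc, hsq, one_mul]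

include hanti in
lemma e_mul_eT_not {T : Finset (Fin n)} {i : Fin n} (h : i ∉ T) :
    ι Q (v i) * eT Q v T = (-1:CliffordAlgebra Q)^T.card * (eT Q v T * ι Q (v i)) := by
  rw [eT, ← Finset.length_sort (α := Fin n) (· ≤ ·) (s := T)]
  exact e_mul_eprod hanti i _ (fun hc => h ((Finset.mem_sort (α := Fin n) (· ≤ ·)).1 hc))

include hanti in
lemma eT_mul_e_not {T : Finset (Fin n)} {i : Fin n} (h : i ∉ T) :
    eT Q v T * ι Q (v i) = (-1:CliffordAlgebra Q)^T.card * (ι Q (v i) * eT Q v T) := by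
  rw [eT, ← Finset.length_sort (α := Fin n) (· ≤ ·) (s := T)]
  exact eprod_mul_e hanti i _ (fun hc => h ((Finset.mem_sort (α := Fin n) (· ≤ ·)).1 hc))

include hsq hanti in
lemma e_mul_eT_insert {T : Finset (Fin n)} {i : Fin n} (h : i ∉ T) :
    ∃ s : CliffordAlgebra Q, (s = 1 ∨ s = -1) ∧
      ι Q (v i) * eT Q v T = s * eT Q v (insert i T) := by
  obtain ⟨l₁, l₂, h1, h2, hins, hT⟩ := sort_insert_split h
  refine ⟨(-1)^l₁.length, sign_pm _, ?_⟩
  rw [eT, eT, hins, hT]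
  rw [List.map_append, List.prod_append, ← mul_assoc,
    e_mul_eprod hanti i l₁ h1, List.map_append, List.map_cons, List.prod_append,
    List.prod_cons]
  simp [mul_assoc]

include hsq hanti in
lemma e_mul_eT_erase {T : Finset (Fin n)} {i : Fin n} (h : i ∈ T) :
    ∃ s : CliffordAlgebra Q, (s = 1 ∨ s = -1) ∧
      ι Q (v i) * eT Q v T = s * eT Q v (T.erase i) := by
  obtain ⟨s, hs, heq⟩ := e_mul_eT_insert hsq hanti (Finset.notMem_erase i T)
  rw [Finset.insert_erase h] at heq
  exact ⟨s, hs, flip_e hsq i hs heq⟩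

include hsq hanti in
lemma e_mul_eT (i : Fin n) (T : Finset (Fin n)) :
    ∃ (s : CliffordAlgebra Q) (T' : Finset (Fin n)), (s = 1 ∨ s = -1) ∧
      ι Q (v i) * eT Q v T = s * eT Q v T' := by
  by_cases h : i ∈ T
  · obtain ⟨s, hs, heq⟩ := e_mul_eT_erase hsq hanti h
    exact ⟨s, _, hs, heq⟩
  · obtain ⟨s, hs, heq⟩ := e_mul_eT_insert hsq hanti h
    exact ⟨s, _, hs, heq⟩

include hsq hanti in
lemma eT_mul_e (T : Finset (Fin n)) (i : Fin n) :
    ∃ (s : CliffordAlgebra Q) (T' : Finset (Fin n)), (s = 1 ∨ s = -1) ∧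
      eT Q v T * ι Q (v i) = s * eT Q v T' := by
  by_cases h : i ∈ T
  · obtain ⟨s, hs, heq⟩ := e_mul_eT_erase hsq hanti h
    -- flip: e_i * eT (T.erase i) = s * eT T, so eT T = s * (e_i * eT erase) after rcases
    have heq2 := flip_e hsq i hs heq
    rcases hs with rfl | rfl
    · rw [one_mul] at heq2
      rw [← heq2, mul_assoc, eT_mul_e_not hanti (Finset.notMem_erase i T),
        sign_comm, e_e_cancel hsq]
      exact ⟨_, _, sign_pm _, rfl⟩
    · rw [neg_one_mul] at heq2
      have h3 : eT Q v T = -(ι Q (v i) * eT Q v (T.erase i)) :=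
        (neg_eq_iff_eq_neg.2 heq2).symm
      rw [h3, neg_mul, mul_assoc, eT_mul_e_not hanti (Finset.notMem_erase i T),
        sign_comm, e_e_cancel hsq, ← neg_mul]
      refine ⟨_, _, ?_, rfl⟩
      rcases sign_pm (A := CliffordAlgebra Q) (T.erase i).card with hc | hc <;> rw [hc] <;> simp
  · rw [eT_mul_e_not hanti h]
    obtain ⟨s, hs, heq⟩ := e_mul_eT_insert hsq hanti h
    rw [heq, ← mul_assoc]
    exact ⟨_, _, sign_mul_pm (sign_pm _) hs, rfl⟩

end Core

section Core2

variable (hsq : ∀ i, ι Q (v i) * ι Q (v i) = 1)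
  (hanti : ∀ i j : Fin n, i ≠ j → ι Q (v i) * ι Q (v j) = -(ι Q (v j) * ι Q (v i)))
  (hantiU : ∀ (i : Fin n), ∀ u ∈ U, ι Q (v i) * ι Q u = -(ι Q u * ι Q (v i)))

lemma anticomm_move {A : Type*} [Ring A] (x y : A) (l : List A)
    (h : ∀ a ∈ l, x * a = -(a * x)) :
    l.prod * (x * y) = (-1:A)^l.length * (x * (l.prod * y)) := by
  rw [← mul_assoc, anticomm_prod' x l h, mul_assoc, mul_assoc]

lemma anticomm_move' {A : Type*} [Ring A] (x y : A) (l : List A)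
    (h : ∀ a ∈ l, x * a = -(a * x)) :
    x * (l.prod * y) = (-1:A)^l.length * (l.prod * (x * y)) := by
  rw [← mul_assoc, anticomm_prod x l h, mul_assoc, mul_assoc]

include hanti hantiU in
lemma e_mul_word_not {T : Finset (Fin n)} {i : Fin n} (l : List Vs)
    (hl : ∀ u ∈ l, u ∈ U) (h : i ∉ T) :
    ι Q (v i) * (eT Q v T * uP Q l)
      = (-1:CliffordAlgebra Q)^(T.card + l.length) * ((eT Q v T * uP Q l) * ι Q (v i)) := by
  have key := anticomm_prod (ι Q (v i))
      (((T.sort (· ≤ ·)).map fun j => ι Q (v j)) ++ l.map (ι Q)) ?_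
  · rw [List.prod_append] at key
    rw [List.length_append, List.length_map, List.length_map, Finset.length_sort] at key
    exact key
  · intro a ha
    rcases List.mem_append.1 ha with h' | h'
    · obtain ⟨j, hj, rfl⟩ := List.mem_map.1 h'
      exact hanti i j (fun hh => h (hh ▸ (Finset.mem_sort (α := Fin n) (· ≤ ·)).1 hj))
    · obtain ⟨u, hu, rfl⟩ := List.mem_map.1 h'
      exact hantiU i u (hl u hu)

include hsq hanti hantiU in
lemma conj_not {T : Finset (Fin n)} {i : Fin n} (l : List Vs)
    (hl : ∀ u ∈ l, u ∈ U) (h : i ∉ T) :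
    ι Q (v i) * (eT Q v T * uP Q l) * ι Q (v i)
      = (-1:CliffordAlgebra Q)^(T.card + l.length) * (eT Q v T * uP Q l) := by
  rw [e_mul_word_not hanti hantiU l hl h, mul_assoc, mul_assoc, mul_assoc, hsq, mul_one]

include hsq hanti hantiU in
lemma conj_mem {T : Finset (Fin n)} {i : Fin n} (l : List Vs)
    (hl : ∀ u ∈ l, u ∈ U) (h : i ∈ T) :
    ι Q (v i) * (eT Q v T * uP Q l) * ι Q (v i)
      = (-1:CliffordAlgebra Q)^(T.card + l.length + 1) * (eT Q v T * uP Q l) := by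
  obtain ⟨l₁, l₂, h1, h2, hsplit⟩ := sort_split h
  have hcard : T.card = l₁.length + l₂.length + 1 := by
    rw [← Finset.length_sort (α := Fin n) (· ≤ ·) (s := T), hsplit]
    simp
    omega
  set x := ι Q (v i) with hx
  set A := (l₁.map fun j => ι Q (v j)).prod with hA
  set B := (l₂.map fun j => ι Q (v j)).prod with hB
  set m := uP Q l with hm
  have hanti₁ : ∀ a ∈ l₁.map fun j => ι Q (v j), x * a = -(a * x) := by
    rintro a ha
    obtain ⟨j, hj, rfl⟩ := List.mem_map.1 ha
    exact hanti i j (fun hh => h1 (hh ▸ hj))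
  have hanti₂ : ∀ a ∈ l₂.map fun j => ι Q (v j), x * a = -(a * x) := by
    rintro a ha
    obtain ⟨j, hj, rfl⟩ := List.mem_map.1 ha
    exact hanti i j (fun hh => h2 (hh ▸ hj))
  have hantim : ∀ a ∈ l.map (ι Q), x * a = -(a * x) := by
    rintro a ha
    obtain ⟨u, hu, rfl⟩ := List.mem_map.1 ha
    exact hantiU i u (hl u hu)
  have hW : eT Q v T * uP Q l = A * (x * (B * m)) := by
    rw [eT, hsplit, List.map_append, List.prod_append, List.map_cons, List.prod_cons]
    rw [← hm, ← hA, ← hB, ← hx]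
    simp [mul_assoc]
  rw [hW]
  have step1 : x * (A * (x * (B * m))) * x = x * (A * (x * (B * (m * x)))) := by
    simp [mul_assoc]
  rw [step1]
  have hmx : m * x = (-1:CliffordAlgebra Q)^l.length * (x * m) := by
    have := anticomm_prod' x (l.map (ι Q)) hantim
    simpa [hm, uP, List.length_map] using this
  have hBxm : B * (x * m) = (-1:CliffordAlgebra Q)^l₂.length * (x * (B * m)) := by
    have := anticomm_move x m (l₂.map fun j => ι Q (v j)) hanti₂
    simpa [← hB, List.length_map] using this
  have hAy : x * (A * (B * m)) = (-1:CliffordAlgebra Q)^l₁.length * (A * (x * (B * m))) := by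
    have := anticomm_move' x (B * m) (l₁.map fun j => ι Q (v j)) hanti₁
    simpa [← hA, List.length_map] using this
  rw [hmx, sign_comm l.length B, sign_comm l.length x, sign_comm l.length A,
    sign_comm l.length x, hBxm, sign_comm l₂.length x, sign_comm l₂.length A,
    sign_comm l₂.length x, e_e_cancel hsq, hAy]
  have hsigns : ∀ (p q r : ℕ),
      (-1:CliffordAlgebra Q)^p * ((-1)^q * ((-1)^r * (A * (x * (B * m)))))
        = (-1)^(p+q+r) * (A * (x * (B * m))) := by
    intro p q r
    rw [← mul_assoc, ← pow_add, ← mul_assoc, ← pow_add]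
  rw [hsigns]
  congr 1
  apply neg_one_pow_congr
  omega

end Core2

/-! ### projection operators -/

variable (Q v) in
/-- averaging with conjugation by `ι Q (v i)` -/
def cmap (i : Fin n) : CliffordAlgebra Q →ₗ[ℂ] CliffordAlgebra Q :=
  (2⁻¹ : ℂ) • (LinearMap.id + LinearMap.mulRight ℂ (ι Q (v i)) ∘ₗ LinearMap.mulLeft ℂ (ι Q (v i)))

variable (Q v) in
lemma cmap_apply (i : Fin n) (x : CliffordAlgebra Q) :
    cmap Q v i x = (2⁻¹ : ℂ) • (x + ι Q (v i) * x * ι Q (v i)) := by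
  simp [cmap]

variable (Q v) in
lemma cmap_fix {i : Fin n} {x : CliffordAlgebra Q} (h : ι Q (v i) * x * ι Q (v i) = x) :
    cmap Q v i x = x := by
  rw [cmap_apply, h, ← two_smul ℂ x, smul_smul]
  norm_num

variable (Q v) in
lemma cmap_kill {i : Fin n} {x : CliffordAlgebra Q} (h : ι Q (v i) * x * ι Q (v i) = -x) :
    cmap Q v i x = 0 := by
  rw [cmap_apply, h, add_neg_cancel, smul_zero]

variable (Q v) in
/-- iterated averaging -/
def Phi (ll : List (Fin n)) : CliffordAlgebra Q →ₗ[ℂ] CliffordAlgebra Q :=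
  ll.foldr (fun i acc => acc ∘ₗ cmap Q v i) LinearMap.id

variable (Q v) in
lemma Phi_cons (i : Fin n) (ll : List (Fin n)) (x : CliffordAlgebra Q) :
    Phi Q v (i :: ll) x = Phi Q v ll (cmap Q v i x) := rfl

variable (Q v) in
lemma Phi_fix {x : CliffordAlgebra Q} :
    ∀ ll : List (Fin n), (∀ i ∈ ll, cmap Q v i x = x) → Phi Q v ll x = x := by
  intro ll
  induction ll with
  | nil => intro _; rfl
  | cons i t ih =>
    intro h
    rw [Phi_cons, h i (by simp)]
    exact ih (fun j hj => h j (by simp [hj]))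

variable (Q v) in
lemma Phi_kill {x : CliffordAlgebra Q} :
    ∀ ll : List (Fin n), (∀ i ∈ ll, cmap Q v i x = x ∨ cmap Q v i x = 0) →
      ∀ j ∈ ll, cmap Q v j x = 0 → Phi Q v ll x = 0 := by
  intro ll
  induction ll with
  | nil => intro _ j hj; simp at hj
  | cons i t ih =>
    intro h j hj hjk
    rcases h i (by simp) with hi | hi
    · rw [Phi_cons, hi]
      rcases List.mem_cons.1 hj with rfl | hjt
      · -- x = cmap x = 0
        rw [hi] at hjk
        rw [hjk, map_zero]
      · exact ih (fun a ha => h a (by simp [ha])) j hjt hjk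
    · rw [Phi_cons, hi, map_zero]

/-! ### the spanning set -/

variable (Q v U) in
def genSet : Set (CliffordAlgebra Q) :=
  {x | ∃ (T : Finset (Fin n)) (l : List Vs), (∀ u ∈ l, u ∈ U) ∧ x = eT Q v T * uP Q l}

lemma eT_empty : eT Q v (∅ : Finset (Fin n)) = 1 := by
  simp [eT]

lemma uP_nil : uP Q ([] : List Vs) = 1 := rfl

lemma uP_append (l₁ l₂ : List Vs) : uP Q (l₁ ++ l₂) = uP Q l₁ * uP Q l₂ := by
  simp [uP]

section Span

variable (hsq : ∀ i, ι Q (v i) * ι Q (v i) = 1)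
  (hanti : ∀ i j : Fin n, i ≠ j → ι Q (v i) * ι Q (v j) = -(ι Q (v j) * ι Q (v i)))
  (hantiU : ∀ (i : Fin n), ∀ u ∈ U, ι Q (v i) * ι Q u = -(ι Q u * ι Q (v i)))
  (hdecomp : ∀ x : Vs, ∃ u ∈ U, x = (∑ i : Fin n, x (i:ℕ) • v i) + u)

include hsq hanti hantiU in
lemma gen_mul_e_mem (T : Finset (Fin n)) (l : List Vs) (hl : ∀ u ∈ l, u ∈ U) (i : Fin n) :
    (eT Q v T * uP Q l) * ι Q (v i) ∈ Submodule.span ℂ (genSet Q v U) := by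
  obtain ⟨s, T', hs, heq⟩ := eT_mul_e hsq hanti T i
  rw [mul_assoc, uP_mul_e hantiU i l hl, sign_comm, ← mul_assoc (eT Q v T),
    heq, mul_assoc]
  have hmem : eT Q v T' * uP Q l ∈ Submodule.span ℂ (genSet Q v U) :=
    Submodule.subset_span ⟨T', l, hl, rfl⟩
  rcases sign_pm (A := CliffordAlgebra Q) l.length with hp | hp <;> rw [hp] <;>
    rcases hs with rfl | rfl <;>
    simp only [one_mul, neg_one_mul, mul_one, mul_neg, neg_neg, mul_assoc, neg_mul] <;>
    first
      | exact hmem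
      | exact Submodule.neg_mem _ hmem

include hsq hanti hantiU hdecomp in
lemma span_genSet_eq_top (x : CliffordAlgebra Q) :
    x ∈ Submodule.span ℂ (genSet Q v U) := by
  have h1 : (1 : CliffordAlgebra Q) ∈ Submodule.span ℂ (genSet Q v U) :=
    Submodule.subset_span ⟨∅, [], by simp, by rw [eT_empty, uP_nil, one_mul]⟩
  have key : ∀ z : CliffordAlgebra Q, ∀ y ∈ Submodule.span ℂ (genSet Q v U),
      y * z ∈ Submodule.span ℂ (genSet Q v U) := by
    intro z
    induction z using CliffordAlgebra.induction with
    | algebraMap r =>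
      intro y hy
      rw [← Algebra.commutes r y, ← Algebra.smul_def]
      exact Submodule.smul_mem _ _ hy
    | ι w =>
      intro y hy
      induction hy using Submodule.span_induction with
      | mem y hy =>
        obtain ⟨T, l, hl, rfl⟩ := hy
        obtain ⟨u, hu, hw⟩ := hdecomp w
        have hιw : ι Q w = (∑ i : Fin n, w (i:ℕ) • ι Q (v i)) + ι Q u := by
          conv_lhs => rw [hw]
          rw [map_add, map_sum]
          simp [map_smul]
        rw [hιw, mul_add, Finset.mul_sum]
        refine Submodule.add_mem _ (Submodule.sum_mem _ fun i _ => ?_) ?_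
        · rw [mul_smul_comm]
          exact Submodule.smul_mem _ _ (gen_mul_e_mem hsq hanti hantiU T l hl i)
        · rw [mul_assoc]
          refine Submodule.subset_span ⟨T, l ++ [u], ?_, ?_⟩
          · intro a ha; rcases List.mem_append.1 ha with h' | h'
            · exact hl a h'
            · simp only [List.mem_singleton] at h'
              exact h' ▸ hu
          · rw [uP_append]; simp [uP, mul_assoc]
      | zero => rw [zero_mul]; exact Submodule.zero_mem _
      | add a b _ _ ha hb => rw [add_mul]; exact Submodule.add_mem _ ha hb
      | smul c a _ ha => rw [smul_mul_assoc]; exact Submodule.smul_mem _ _ ha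
    | mul a b ha hb =>
      intro y hy
      rw [← mul_assoc]
      exact hb _ (ha y hy)
    | add a b ha hb =>
      intro y hy
      rw [mul_add]
      exact Submodule.add_mem _ (ha y hy) (hb y hy)
  have := key x 1 h1
  rwa [one_mul] at this

end Span

/-! ### bridge to `evenCliffordPart` -/

lemma uP_mem_even {l : List Vs} (hl : ∀ u ∈ l, u ∈ U) (hlen : Even l.length) :
    uP Q l ∈ evenCliffordPart Q U := by
  apply Submodule.subset_span
  obtain ⟨k, hk⟩ := hlen
  have h2k : 2 * k = l.length := by omega
  refine ⟨k, fun j => l.get (Fin.cast h2k j), fun j => hl _ (l.get_mem _), ?_⟩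
  rw [uP]
  congr 1
  apply List.ext_getElem
  · simp [← h2k]
  · intro m hm₁ hm₂
    simp [List.getElem_map, List.getElem_finRange]

lemma even_gen_eq_uP {k : ℕ} (u : Fin (2 * k) → Vs) :
    ((List.finRange (2 * k)).map fun j => ι Q (u j)).prod
      = uP Q ((List.finRange (2 * k)).map u) := by
  rw [uP, List.map_map]
  rfl

/-! ### deriving the basic relations -/

section Derive

variable (hQ : ∀ a : Vs, Q a = ∑' i, (a i) ^ 2)
  (hv : ∀ i, v i = lp.single 2 (i : ℕ) 1)
  (hU : U = {u | ∀ i : Fin n, Q (v i + u) - Q (v i) - Q u = 0})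

include hQ in
lemma Q_zero' : Q (0 : Vs) = 0 := by
  rw [hQ]
  have : ∀ k : ℕ, ((0 : Vs) k)^2 = 0 := by intro k; rw [lp.coeFn_zero]; simp
  rw [tsum_congr this, tsum_zero]

include hQ hv in
lemma Qv_eq_one (i : Fin n) : Q (v i) = 1 := by
  have h : v i = (lp.single 2 (i:ℕ) 1 : Vs) + 0 := by rw [hv i, add_zero]
  rw [h, Q_single_add Q hQ, Q_zero' hQ, lp.coeFn_zero]
  simp

include hQ hv in
lemma derive_hsq : ∀ i, ι Q (v i) * ι Q (v i) = 1 := by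
  intro i
  rw [CliffordAlgebra.ι_sq_scalar, Qv_eq_one hQ hv i, map_one]

include hQ hv in
lemma derive_hanti :
    ∀ i j : Fin n, i ≠ j → ι Q (v i) * ι Q (v j) = -(ι Q (v j) * ι Q (v i)) := by
  intro i j hij
  have hij' : (i : ℕ) ≠ (j : ℕ) := fun h => hij (Fin.val_injective h)
  have hpolar : QuadraticMap.polar Q (v i) (v j) = 0 := by
    rw [QuadraticMap.polar, Qv_eq_one hQ hv i, Qv_eq_one hQ hv j]
    rw [show v i + v j = (lp.single 2 (i:ℕ) 1 : Vs) + v j by rw [hv i]]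
    rw [Q_single_add Q hQ, Qv_eq_one hQ hv j, hv j,
      lp.single_apply_ne 2 (j:ℕ) 1 hij']
    ring
  have hsw := CliffordAlgebra.ι_mul_ι_add_swap (Q := Q) (v i) (v j)
  rw [hpolar, map_zero] at hsw
  exact eq_neg_of_add_eq_zero_left hsw

include hU in
lemma derive_hantiU :
    ∀ (i : Fin n), ∀ u ∈ U, ι Q (v i) * ι Q u = -(ι Q u * ι Q (v i)) := by
  intro i u hu
  rw [hU] at hu
  have hpolar : QuadraticMap.polar Q (v i) u = 0 := hu i
  have hsw := CliffordAlgebra.ι_mul_ι_add_swap (Q := Q) (v i) u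
  rw [hpolar, map_zero] at hsw
  exact eq_neg_of_add_eq_zero_left hsw

include hQ hv hU in
lemma derive_hdecomp :
    ∀ x : Vs, ∃ u ∈ U, x = (∑ i : Fin n, x (i:ℕ) • v i) + u := by
  intro x
  set w := ∑ i : Fin n, x (i:ℕ) • v i with hw
  have hcoord : ∀ i : Fin n, (x - w) (i:ℕ) = 0 := by
    intro i
    have hws : w (i:ℕ) = x (i:ℕ) := by
      rw [hw, lp.coeFn_sum, Finset.sum_apply]
      rw [Finset.sum_eq_single i]
      · rw [lp.coeFn_smul, Pi.smul_apply, hv i, lp.single_apply_self, smul_eq_mul, mul_one]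
      · intro j _ hji
        have hji' : (i : ℕ) ≠ (j : ℕ) := fun h => hji (Fin.val_injective h.symm)
        rw [lp.coeFn_smul, Pi.smul_apply, hv j, lp.single_apply_ne 2 (j:ℕ) 1 hji',
          smul_eq_mul, mul_zero]
      · intro h; exact absurd (Finset.mem_univ i) h
    rw [lp.coeFn_sub, Pi.sub_apply, hws, sub_self]
  refine ⟨x - w, ?_, by abel⟩
  rw [hU]
  intro i
  rw [Qv_eq_one hQ hv i]
  rw [show v i + (x - w) = (lp.single 2 (i:ℕ) 1 : Vs) + (x - w) by rw [hv i]]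
  rw [Q_single_add Q hQ, hcoord i]
  ring

end Derive

end Main



end Stmt16Aux

end Aux

open Stmt16Aux CliffordAlgebra

theorem stmt_16 (Q : QuadraticForm ℂ (lp (fun _ : ℕ => ℂ) 2))
    (hQ : ∀ a : lp (fun _ : ℕ => ℂ) 2, Q a = ∑' i, (a i) ^ 2)
    (n : ℕ) (hpos : 0 < n) (hodd : Odd n)
    -- the standard unit vectors `v₁, …, v_n`
    (v : Fin n → lp (fun _ : ℕ => ℂ) 2) (hv : ∀ i, v i = lp.single 2 (i : ℕ) 1)
    -- `U = v₁^⊥ ∩ … ∩ v_n^⊥`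
    (U : Set (lp (fun _ : ℕ => ℂ) 2))
    (hU : U = {u | ∀ i : Fin n, Q (v i + u) - Q (v i) - Q u = 0}) :
    (⨅ i : Fin n, Subalgebra.toSubmodule
        (Subalgebra.centralizer ℂ
          ({CliffordAlgebra.ι Q (v i)} : Set (CliffordAlgebra Q)))) =
      evenCliffordPart Q U ⊔
        Submodule.map
          (LinearMap.mulLeft ℂ
            (((List.finRange n).map fun i : Fin n => CliffordAlgebra.ι Q (v i)).prod))
          (evenCliffordPart Q U) := by
  classical
  have hsq := derive_hsq hQ hv
  have hanti := derive_hanti hQ hv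
  have hantiU := derive_hantiU (v := v) hU
  have hdecomp := derive_hdecomp hQ hv hU
  set ω := ((List.finRange n).map fun i : Fin n => ι Q (v i)).prod with hω
  have hωT : ω = eT Q v Finset.univ := by
    rw [eT, Fin.sort_univ]
  -- commutation of even elements with the generators
  have hcommEven : ∀ (i : Fin n), ∀ x ∈ evenCliffordPart Q U,
      ι Q (v i) * x = x * ι Q (v i) := by
    intro i x hx
    induction hx using Submodule.span_induction with
    | mem y hy =>
      obtain ⟨k, u, hu, rfl⟩ := hy
      rw [even_gen_eq_uP, e_mul_uP hantiU i _ (by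
        rintro a ha
        obtain ⟨j, hj, rfl⟩ := List.mem_map.1 ha
        exact hu j)]
      rw [List.length_map, List.length_finRange, Even.neg_one_pow ⟨k, by ring⟩, one_mul]
    | zero => simp
    | add a b _ _ ha hb => rw [mul_add, ha, hb, ← add_mul]
    | smul c a _ ha => rw [mul_smul_comm, ha, smul_mul_assoc]
  have hωcomm : ∀ i : Fin n, ι Q (v i) * ω = ω * ι Q (v i) := by
    intro i
    have hkey := conj_mem hsq hanti hantiU (T := Finset.univ) (i := i) [] (by simp)
      (Finset.mem_univ i)
    rw [uP_nil, mul_one] at hkey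
    have heven : Even ((Finset.univ : Finset (Fin n)).card + ([] : List Vs).length + 1) := by
      simpa using hodd.add_one
    rw [heven.neg_one_pow, one_mul] at hkey
    have h2 := congrArg (· * ι Q (v i)) hkey
    rw [mul_assoc (ι Q (v i) * eT Q v Finset.univ), hsq i, mul_one] at h2
    rw [hωT, h2]
  apply le_antisymm
  · -- hard direction
    intro x hx
    have hxc : ∀ i : Fin n, ι Q (v i) * x = x * ι Q (v i) := by
      intro i
      have hmem := (Submodule.mem_iInf _).1 hx i
      rw [Subalgebra.mem_toSubmodule] at hmem
      exact (Subalgebra.mem_centralizer_iff ℂ).1 hmem _ rfl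
    have hfix : ∀ i : Fin n, cmap Q v i x = x := by
      intro i
      exact cmap_fix Q v (by rw [hxc i, mul_assoc, hsq i, mul_one])
    have hx0 : x ∈ Submodule.span ℂ (genSet Q v U) :=
      span_genSet_eq_top hsq hanti hantiU hdecomp x
    have hPhix : Phi Q v (List.finRange n) x = x :=
      Phi_fix Q v _ (fun i _ => hfix i)
    rw [← hPhix]
    clear hPhix hfix hxc hx
    induction hx0 using Submodule.span_induction with
    | mem y hy =>
      obtain ⟨T, l, hl, rfl⟩ := hy
      by_cases hpar : Even (T.card + l.length)
      · by_cases hT : T = ∅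
        · have hfixall : ∀ i ∈ List.finRange n,
              cmap Q v i (eT Q v T * uP Q l) = eT Q v T * uP Q l := by
            intro i _
            apply cmap_fix
            rw [conj_not hsq hanti hantiU l hl (by rw [hT]; exact Finset.notMem_empty i),
              hpar.neg_one_pow, one_mul]
          rw [Phi_fix Q v _ hfixall]
          subst hT
          rw [eT_empty, one_mul]
          exact Submodule.mem_sup_left (uP_mem_even hl (by simpa using hpar))
        · obtain ⟨j, hj⟩ := Finset.nonempty_iff_ne_empty.2 hT
          have hall : ∀ i ∈ List.finRange n,
              cmap Q v i (eT Q v T * uP Q l) = eT Q v T * uP Q l ∨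
                cmap Q v i (eT Q v T * uP Q l) = 0 := by
            intro i _
            by_cases hiT : i ∈ T
            · right
              apply cmap_kill
              rw [conj_mem hsq hanti hantiU l hl hiT, hpar.add_one.neg_one_pow, neg_one_mul]
            · left
              apply cmap_fix
              rw [conj_not hsq hanti hantiU l hl hiT, hpar.neg_one_pow, one_mul]
          rw [Phi_kill Q v _ hall j (List.mem_finRange j) (by
            apply cmap_kill
            rw [conj_mem hsq hanti hantiU l hl hj, hpar.add_one.neg_one_pow, neg_one_mul])]
          exact Submodule.zero_mem _
      · by_cases hT : T = Finset.univ
        · have hfixall : ∀ i ∈ List.finRange n,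
              cmap Q v i (eT Q v T * uP Q l) = eT Q v T * uP Q l := by
            intro i _
            apply cmap_fix
            rw [conj_mem hsq hanti hantiU l hl (by rw [hT]; exact Finset.mem_univ i),
              (Nat.even_add_one.2 hpar).neg_one_pow, one_mul]
          rw [Phi_fix Q v _ hfixall]
          subst hT
          have hlen : Even l.length := by
            rcases Nat.even_or_odd l.length with he | ho
            · exact he
            · exfalso
              apply hpar
              have hcard : (Finset.univ : Finset (Fin n)).card = n := by simp
              rw [hcard]
              exact hodd.add_odd ho
          apply Submodule.mem_sup_right
          exact ⟨uP Q l, uP_mem_even hl hlen, by rw [LinearMap.mulLeft_apply, hωT]⟩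
        · have hex : ∃ j : Fin n, j ∉ T := by
            by_contra hc
            push_neg at hc
            exact hT (Finset.eq_univ_iff_forall.2 hc)
          obtain ⟨j, hj⟩ := hex
          have hall : ∀ i ∈ List.finRange n,
              cmap Q v i (eT Q v T * uP Q l) = eT Q v T * uP Q l ∨
                cmap Q v i (eT Q v T * uP Q l) = 0 := by
            intro i _
            by_cases hiT : i ∈ T
            · left
              apply cmap_fix
              rw [conj_mem hsq hanti hantiU l hl hiT,
                (Nat.even_add_one.2 hpar).neg_one_pow, one_mul]
            · right
              apply cmap_kill
              rw [conj_not hsq hanti hantiU l hl hiT,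
                (Nat.not_even_iff_odd.1 hpar).neg_one_pow, neg_one_mul]
          rw [Phi_kill Q v _ hall j (List.mem_finRange j) (by
            apply cmap_kill
            rw [conj_not hsq hanti hantiU l hl hj,
              (Nat.not_even_iff_odd.1 hpar).neg_one_pow, neg_one_mul])]
          exact Submodule.zero_mem _
    | zero => rw [map_zero]; exact Submodule.zero_mem _
    | add a b _ _ ha hb => rw [map_add]; exact Submodule.add_mem _ ha hb
    | smul c a _ ha => rw [map_smul]; exact Submodule.smul_mem _ _ ha
  · -- easy direction
    apply sup_le
    · intro x hx
      refine (Submodule.mem_iInf _).2 fun i => ?_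
      rw [Subalgebra.mem_toSubmodule]
      refine (Subalgebra.mem_centralizer_iff ℂ).2 fun g hg => ?_
      rw [Set.mem_singleton_iff] at hg
      subst hg
      exact hcommEven i x hx
    · rintro y ⟨x, hx, rfl⟩
      refine (Submodule.mem_iInf _).2 fun i => ?_
      rw [Subalgebra.mem_toSubmodule]
      refine (Subalgebra.mem_centralizer_iff ℂ).2 fun g hg => ?_
      rw [Set.mem_singleton_iff] at hg
      subst hg
      rw [LinearMap.mulLeft_apply, ← mul_assoc, hωcomm i, mul_assoc,
        hcommEven i x hx, ← mul_assoc]
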